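/- (Optimization-level correctness of the Theorem 1 reduction.) In the SpecialRM instance constructed from a finite simple graph G' = (V', E') with minimum degree at least 1 and price p > 0, the maximum over all seed sets S ⊆ V' of the number of non-seed adopters equals |V'| minus the minimum vertex cover number: max_{S ⊆ V'} |σ_p(S) \ S| = |V'| − τ(G'), where τ(G') is the minimum cardinality of a vertex cover of G'. -/
import Mathlib


open Finset
open scoped Classical

/-- A set `S` is adoption-closed for seed set `A` at price `p`. The adoption set `σ_p(A)`
is the least such set. -/
def AdoptClosed {V : Type*} [DecidableEq V]
    (χ : V → ℝ) (w : V → V → ℝ) (F : ℝ → ℝ) (p : ℝ) (A S : Finset V) : Prop :=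
  A ⊆ S ∧ ∀ v, p ≤ χ v + F (∑ u ∈ S.erase v, w u v) → v ∈ S

/-- The weights of the SpecialRM instance constructed from a simple graph `G` at price `p`:
`w u v = p / deg v` if `{u,v}` is an edge, and `0` otherwise. -/
noncomputable def srmW {V : Type*} [Fintype V] (G : SimpleGraph V) [DecidableRel G.Adj]
    (p : ℝ) (u v : V) : ℝ :=
  if G.Adj u v then p / G.degree v else 0

private lemma srmW_nonneg {V : Type*} [Fintype V] (G : SimpleGraph V) [DecidableRel G.Adj]
    {p : ℝ} (hp : 0 ≤ p) (u v : V) : 0 ≤ srmW G p u v := by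
  unfold srmW
  split
  · positivity
  · exact le_refl 0

private lemma sum_srmW {V : Type*} [Fintype V] [DecidableEq V] (G : SimpleGraph V)
    [DecidableRel G.Adj] (p : ℝ) (A : Finset V) (v : V) :
    ∑ u ∈ A, srmW G p u v
      = ((A.filter (fun u => G.Adj u v)).card : ℝ) * (p / G.degree v) := by
  simp only [srmW]
  rw [← Finset.sum_filter, Finset.sum_const, nsmul_eq_mul]

/-- If some neighbor `b` of `v` is missing from `A`, the influence on `v` is below `p`. -/
private lemma sum_srmW_lt {V : Type*} [Fintype V] [DecidableEq V] (G : SimpleGraph V)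
    [DecidableRel G.Adj] {p : ℝ} (hp : 0 < p) (hdeg : ∀ v, 1 ≤ G.degree v)
    {A : Finset V} {v b : V} (hadj : G.Adj v b) (hb : b ∉ A) :
    ∑ u ∈ A, srmW G p u v < p := by
  rw [sum_srmW]
  set d : ℝ := (G.degree v : ℝ) with hd
  have hd1 : (1 : ℝ) ≤ d := by rw [hd]; exact_mod_cast hdeg v
  have hd0 : d ≠ 0 := by linarith
  have hpd : 0 < p / d := div_pos hp (by linarith)
  have hsub : A.filter (fun u => G.Adj u v) ⊆ (G.neighborFinset v).erase b := by
    intro u hu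
    rw [Finset.mem_filter] at hu
    refine Finset.mem_erase.mpr ⟨?_, ?_⟩
    · rintro rfl; exact hb hu.1
    · exact (SimpleGraph.mem_neighborFinset _ _ _).mpr hu.2.symm
  have hcard : (A.filter (fun u => G.Adj u v)).card ≤ G.degree v - 1 := by
    calc (A.filter (fun u => G.Adj u v)).card
        ≤ ((G.neighborFinset v).erase b).card := Finset.card_le_card hsub
      _ = G.degree v - 1 := by
          rw [Finset.card_erase_of_mem ((SimpleGraph.mem_neighborFinset _ _ _).mpr hadj),
            G.card_neighborFinset_eq_degree]
  have hcardR : ((A.filter (fun u => G.Adj u v)).card : ℝ) ≤ d - 1 := by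
    have h : ((A.filter (fun u => G.Adj u v)).card : ℝ) ≤ ((G.degree v - 1 : ℕ) : ℝ) := by
      exact_mod_cast hcard
    rwa [Nat.cast_sub (hdeg v), Nat.cast_one] at h
  have hdp : d * (p / d) = p := by field_simp
  calc ((A.filter (fun u => G.Adj u v)).card : ℝ) * (p / d)
      ≤ (d - 1) * (p / d) := mul_le_mul_of_nonneg_right hcardR hpd.le
    _ = d * (p / d) - p / d := by ring
    _ < p := by rw [hdp]; linarith

/-- If all neighbors of `v` are in `A`, the influence on `v` is at least `p`. -/
private lemma sum_srmW_ge {V : Type*} [Fintype V] [DecidableEq V] (G : SimpleGraph V)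
    [DecidableRel G.Adj] {p : ℝ} (hp : 0 < p) (hdeg : ∀ v, 1 ≤ G.degree v)
    {A : Finset V} {v : V} (hnb : G.neighborFinset v ⊆ A) :
    p ≤ ∑ u ∈ A, srmW G p u v := by
  rw [sum_srmW]
  set d : ℝ := (G.degree v : ℝ) with hd
  have hd1 : (1 : ℝ) ≤ d := by rw [hd]; exact_mod_cast hdeg v
  have hd0 : d ≠ 0 := by linarith
  have hpd : 0 < p / d := div_pos hp (by linarith)
  have hsub : G.neighborFinset v ⊆ A.filter (fun u => G.Adj u v) := by
    intro u hu
    exact Finset.mem_filter.mpr ⟨hnb hu, ((SimpleGraph.mem_neighborFinset _ _ _).mp hu).symm⟩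
  have hcard : G.degree v ≤ (A.filter (fun u => G.Adj u v)).card := by
    rw [← G.card_neighborFinset_eq_degree]
    exact Finset.card_le_card hsub
  have hcardR : d ≤ ((A.filter (fun u => G.Adj u v)).card : ℝ) := by
    rw [hd]; exact_mod_cast hcard
  have hdp : d * (p / d) = p := by field_simp
  calc p = d * (p / d) := hdp.symm
    _ ≤ ((A.filter (fun u => G.Adj u v)).card : ℝ) * (p / d) :=
        mul_le_mul_of_nonneg_right hcardR hpd.le

/-- Optimization-level correctness of the Theorem 1 reduction: the
maximum over all seed sets S of the number of non-seed adopters |σ_p(S) \ S| equals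
|V| − τ(G), where τ(G) is the minimum vertex cover number. -/
theorem specialRM_max_nonseed_adopters_eq_card_sub_tau
    {V : Type*} [Fintype V] [DecidableEq V]
    (G : SimpleGraph V) [DecidableRel G.Adj]
    (hdeg : ∀ v, 1 ≤ G.degree v) (p : ℝ) (hp : 0 < p)
    (sigma : Finset V → Finset V)
    (hsigma : ∀ S : Finset V,
      IsLeast {T : Finset V | AdoptClosed (fun _ => (0 : ℝ)) (srmW G p) id p S T}
        (sigma S))
    (τ : ℕ)
    (hτ : IsLeast {k : ℕ | ∃ C : Finset V,
      (∀ a b, G.Adj a b → a ∈ C ∨ b ∈ C) ∧ C.card = k} τ) :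
    IsGreatest {k : ℕ | ∃ S : Finset V, (sigma S \ S).card = k}
      (Fintype.card V - τ) := by
  classical
  obtain ⟨⟨C, hC, hCcard⟩, hτmin⟩ := hτ
  constructor
  · -- Seeding the minimum vertex cover makes everyone adopt.
    refine ⟨C, ?_⟩
    have hsC := hsigma C
    have huniv : sigma C = Finset.univ := by
      apply Finset.eq_univ_of_forall
      intro v
      by_cases hv : v ∈ C
      · exact hsC.1.1 hv
      · apply hsC.1.2 v
        have hnb : G.neighborFinset v ⊆ (sigma C).erase v := by
          intro u hu
          rw [SimpleGraph.mem_neighborFinset] at hu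
          refine Finset.mem_erase.mpr ⟨(G.ne_of_adj hu).symm, ?_⟩
          exact hsC.1.1 ((hC v u hu).resolve_left hv)
        simpa using sum_srmW_ge G hp hdeg hnb
    rw [huniv, Finset.card_sdiff_of_subset (Finset.subset_univ C), Finset.card_univ, hCcard]
  · -- Upper bound : non-seed adopters form an independent set.
    rintro k ⟨S, rfl⟩
    set D := sigma S \ S with hD
    have hsS := hsigma S
    have hcover : ∀ a b, G.Adj a b → a ∈ Finset.univ \ D ∨ b ∈ Finset.univ \ D := by
      intro a b hab
      by_contra hcon
      push_neg at hcon
      obtain ⟨ha, hb⟩ := hcon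
      have haD : a ∈ D := by simpa using ha
      have hbD : b ∈ D := by simpa using hb
      have haS : a ∈ sigma S ∧ a ∉ S := Finset.mem_sdiff.mp haD
      have hbS : b ∈ sigma S ∧ b ∉ S := Finset.mem_sdiff.mp hbD
      -- T := sigma S \ {a, b} is adoption-closed for S
      set T : Finset V := sigma S \ {a, b} with hT
      have hTclosed : AdoptClosed (fun _ => (0 : ℝ)) (srmW G p) id p S T := by
        constructor
        · intro v hv
          refine Finset.mem_sdiff.mpr ⟨hsS.1.1 hv, ?_⟩
          simp only [Finset.mem_insert, Finset.mem_singleton]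
          rintro (rfl | rfl)
          · exact haS.2 hv
          · exact hbS.2 hv
        · intro v hv
          simp only [zero_add, id] at hv
          -- v is in sigma S since sums are monotone
          have hsub : T.erase v ⊆ (sigma S).erase v :=
            Finset.erase_subset_erase v (Finset.sdiff_subset)
          have hmono : ∑ u ∈ T.erase v, srmW G p u v
              ≤ ∑ u ∈ (sigma S).erase v, srmW G p u v :=
            Finset.sum_le_sum_of_subset_of_nonneg hsub
              (fun u _ _ => srmW_nonneg G hp.le u v)
          have hvsig : v ∈ sigma S := hsS.1.2 v (by simpa using le_trans hv hmono)
          refine Finset.mem_sdiff.mpr ⟨hvsig, ?_⟩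
          simp only [Finset.mem_insert, Finset.mem_singleton]
          rintro (rfl | rfl)
          · -- v = a: neighbor b is missing from T.erase a, so the sum is < p
            have hbnot : b ∉ T.erase v := by
              intro hmem
              have := (Finset.mem_erase.mp hmem).2
              have := (Finset.mem_sdiff.mp this).2
              simp at this
            exact absurd hv (not_le.mpr (sum_srmW_lt G hp hdeg hab hbnot))
          · -- v = b: neighbor a is missing from T.erase b
            have hanot : a ∉ T.erase v := by
              intro hmem
              have := (Finset.mem_erase.mp hmem).2
              have := (Finset.mem_sdiff.mp this).2
              simp at this
            exact absurd hv (not_le.mpr (sum_srmW_lt G hp hdeg hab.symm hanot))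
      -- minimality of sigma S contradicts a ∉ T
      have hle : sigma S ⊆ T := hsS.2 hTclosed
      have : a ∈ T := hle haS.1
      have := (Finset.mem_sdiff.mp this).2
      simp at this
    -- from the cover, bound the cardinality
    have hτle : τ ≤ (Finset.univ \ D).card := hτmin ⟨Finset.univ \ D, hcover, rfl⟩
    have hcardD : (Finset.univ \ D).card = Fintype.card V - D.card := by
      rw [Finset.card_sdiff_of_subset (Finset.subset_univ D), Finset.card_univ]
    have hDle : D.card ≤ Fintype.card V := by
      simpa [Finset.card_univ] using Finset.card_le_card (Finset.subset_univ D)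
    omega
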